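/- The class of languages accepted by quasi-deterministic all-final (qDF) sensing 5'→3' WK automata properly includes the class of languages accepted by quasi-deterministic all-final simple (qDFS) sensing 5'→3' WK automata: every qDFS automaton is a qDF automaton, and the language aaa(ab)*bbb = { aaa(ab)ⁿbbb : n ≥ 0 } is accepted by a qDF sensing 5'→3' WK automaton but by no qDFS sensing 5'→3' WK automaton. -/

import Mathlib

open Computability

/-- The two-letter alphabet `{a, b}`. -/
inductive Letter : Type
  | a : Letter
  | b : Letter
deriving DecidableEq

instance : Fintype Letter :=
  ⟨{Letter.a, Letter.b}, fun x => by cases x <;> simp⟩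

open Letter

/-- A sensing 5'→3' Watson-Crick automaton over the alphabet `T` with state set `Q`:
an initial state `q0`, a set `F` of final states, and a transition mapping
`δ : Q × T* × T* → 2^Q` that is nonempty for only finitely many triples. -/
structure WKAutomaton (T : Type) (Q : Type) where
  q0 : Q
  F : Set Q
  δ : Q → List T → List T → Set Q
  finite_delta : {t : Q × List T × List T | (δ t.1 t.2.1 t.2.2).Nonempty}.Finite

namespace WKAutomaton

variable {T Q : Type}

/-- One computation step on configurations:
`(q, x ++ w' ++ y) ⇒ (q', w')` iff `q' ∈ δ q x y`. -/
def Step (A : WKAutomaton T Q) (c c' : Q × List T) : Prop :=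
  ∃ x y : List T, c.2 = x ++ c'.2 ++ y ∧ c'.1 ∈ A.δ c.1 x y

/-- The accepted language: words `w` with `(q₀, w) ⇒* (q_F, λ)` for some final `q_F`. -/
def Lang (A : WKAutomaton T Q) : Set (List T) :=
  {w | ∃ qf ∈ A.F, Relation.ReflTransGen A.Step (A.q0, w) (qf, [])}

/-- `A` is deterministic: in every configuration at most one computation step
(choice of `x`, `y`, `w'`, `q'`) is applicable. -/
def Deterministic (A : WKAutomaton T Q) : Prop :=
  ∀ (q : Q) (w x₁ y₁ w₁ x₂ y₂ w₂ : List T) (q₁ q₂ : Q),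
    w = x₁ ++ w₁ ++ y₁ → q₁ ∈ A.δ q x₁ y₁ →
    w = x₂ ++ w₂ ++ y₂ → q₂ ∈ A.δ q x₂ y₂ →
    x₁ = x₂ ∧ y₁ = y₂ ∧ w₁ = w₂ ∧ q₁ = q₂

/-- `A` is quasi-deterministic: for every configuration `(q,w)`, whenever
`(q,w) ⇒ (p,u)` and `(q,w) ⇒ (r,v)`, it holds that `p = r`. -/
def QuasiDet (A : WKAutomaton T Q) : Prop :=
  ∀ (q : Q) (w : List T) (p r : Q) (u v : List T),
    A.Step (q, w) (p, u) → A.Step (q, w) (r, v) → p = r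

/-- `A` is state-deterministic: for every state `q` there is at most one state `p`
with `p ∈ δ(q,u,v)` for some words `u`, `v`. -/
def StateDet (A : WKAutomaton T Q) : Prop :=
  ∀ (q p₁ p₂ : Q) (u₁ v₁ u₂ v₂ : List T),
    p₁ ∈ A.δ q u₁ v₁ → p₂ ∈ A.δ q u₂ v₂ → p₁ = p₂

/-- `A` is stateless: `Q = F = {q₀}`. -/
def Stateless (A : WKAutomaton T Q) : Prop :=
  (∀ q : Q, q = A.q0) ∧ A.F = {A.q0}

/-- `A` is all-final: `Q = F`. -/
def AllFinal (A : WKAutomaton T Q) : Prop := A.F = Set.univ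

/-- `A` is simple: at most one head reads in each step. -/
def Simple (A : WKAutomaton T Q) : Prop :=
  ∀ (q : Q) (u v : List T), (A.δ q u v).Nonempty → u = [] ∨ v = []

/-- `A` is 1-limited: exactly one letter is read in each step. -/
def OneLimited (A : WKAutomaton T Q) : Prop :=
  ∀ (q : Q) (u v : List T), (A.δ q u v).Nonempty →
    (u = [] ∧ v.length = 1) ∨ (u.length = 1 ∧ v = [])

end WKAutomaton

/-- Equality of languages modulo the empty word. -/
def EqModLambda {T : Type} (L₁ L₂ : Set (List T)) : Prop :=
  ∀ w : List T, w ≠ [] → (w ∈ L₁ ↔ w ∈ L₂)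

/-- `L` is accepted (modulo the empty word) by some sensing 5'→3' WK automaton
with a finite state set satisfying the property `P`. -/
def AcceptsWith (T : Type) (P : ∀ Q : Type, WKAutomaton T Q → Prop)
    (L : Set (List T)) : Prop :=
  ∃ (Q : Type) (_ : Finite Q) (A : WKAutomaton T Q), P Q A ∧ EqModLambda A.Lang L

/-- The language `aaa(ab)*bbb = { aaa(ab)ⁿbbb : n ≥ 0 }`. -/
def Laaabbb : Set (List Letter) :=
  {w | ∃ n : ℕ, w = [a, a, a] ++ (List.replicate n [a, b]).flatten ++ [b, b, b]}

/-! ### Auxiliary material -/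

open Letter

/-- `(ab)^n`. -/
abbrev repAB (n : ℕ) : List Letter := (List.replicate n [a, b]).flatten

lemma repAB_succ (n : ℕ) : repAB (n + 1) = [a, b] ++ repAB n := by
  rw [repAB, List.replicate_succ, List.flatten_cons]

lemma repAB_add (m n : ℕ) : repAB (m + n) = repAB m ++ repAB n := by
  rw [repAB, List.replicate_add, List.flatten_append]

lemma repAB_one : repAB 1 = [a, b] := by
  rw [repAB, List.replicate_succ, List.flatten_cons]
  rfl

lemma repAB_length (n : ℕ) : (repAB n).length = 2 * n := by
  induction n with
  | zero => rfl
  | succ n ih =>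
    rw [repAB_succ, List.length_append, ih]
    simp only [List.length_cons, List.length_nil]
    omega

/-- In any WK automaton, from an accepting computation on a nonempty word we can
extract the first step that reads something: the portion read in that step
(a prefix `x` and a suffix `y` of the word) is itself fully consumable from the
initial state of the computation. -/
lemma firstRead {Q : Type} (A : WKAutomaton Letter Q) (q' : Q) :
    ∀ c : Q × List Letter, Relation.ReflTransGen A.Step c (q', []) → c.2 ≠ [] →
      ∃ (x y mid : List Letter) (q1 q2 : Q), q2 ∈ A.δ q1 x y ∧
        c.2 = x ++ mid ++ y ∧ x ++ y ≠ [] ∧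
        Relation.ReflTransGen A.Step (c.1, x ++ y) (q2, []) := by
  intro c h
  induction h using Relation.ReflTransGen.head_induction_on with
  | refl => intro hne; exact absurd rfl hne
  | head step rest ih =>
    rename_i ca cc
    intro hne
    obtain ⟨x, y, hdec, hmem⟩ := step
    by_cases hxy : x ++ y = []
    · obtain ⟨hx, hy⟩ := List.append_eq_nil_iff.mp hxy
      subst hx; subst hy
      have hdec' : ca.2 = cc.2 := by simpa using hdec
      obtain ⟨x', y', mid, q1, q2, h1, h2, h3, h4⟩ := ih (hdec' ▸ hne)
      refine ⟨x', y', mid, q1, q2, h1, hdec'.trans h2, h3, ?_⟩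
      exact Relation.ReflTransGen.head
        (show A.Step (ca.1, x' ++ y') (cc.1, x' ++ y') from ⟨[], [], by simp, hmem⟩) h4
    · refine ⟨x, y, cc.2, ca.1, cc.1, hmem, hdec, hxy, ?_⟩
      exact Relation.ReflTransGen.single ⟨x, y, by simp, hmem⟩

/-- The qDF automaton for `aaa(ab)*bbb`: from state `false` read `aaa` and `bbb`
simultaneously, from state `true` strip `ab` from the left. -/
def Aqdf : WKAutomaton Letter Bool where
  q0 := false
  F := Set.univ
  δ := fun q x y =>
    {p | p = true ∧ ((q = false ∧ x = [a, a, a] ∧ y = [b, b, b]) ∨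
                     (q = true ∧ x = [a, b] ∧ y = []))}
  finite_delta := by
    apply Set.Finite.subset
      ((Set.finite_singleton ((true, ([a, b], ([] : List Letter))) :
          Bool × List Letter × List Letter)).insert
        (false, ([a, a, a], [b, b, b])))
    rintro ⟨q, x, y⟩ ⟨p, hp, h | h⟩
    · simp only [Set.mem_insert_iff, Set.mem_singleton_iff]
      left; simp_all
    · simp only [Set.mem_insert_iff, Set.mem_singleton_iff]
      right; simp_all

lemma Aqdf_mem_delta {q p : Bool} {x y : List Letter} (h : p ∈ Aqdf.δ q x y) :
    p = true ∧ ((q = false ∧ x = [a, a, a] ∧ y = [b, b, b]) ∨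
                (q = true ∧ x = [a, b] ∧ y = [])) := h

lemma Aqdf_rep_comp (n : ℕ) :
    Relation.ReflTransGen Aqdf.Step (true, repAB n) (true, []) := by
  induction n with
  | zero => exact Relation.ReflTransGen.refl
  | succ n ih =>
    refine Relation.ReflTransGen.head ⟨[a, b], [], ?_, ?_⟩ ih
    · simp [repAB_succ]
    · exact ⟨rfl, Or.inr ⟨rfl, rfl, rfl⟩⟩

lemma Aqdf_invar (q' : Bool) :
    ∀ c : Bool × List Letter, Relation.ReflTransGen Aqdf.Step c (q', []) →
      (c.1 = true → ∃ n, c.2 = repAB n) ∧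
      (c.1 = false → c.2 = [] ∨ ∃ n, c.2 = [a, a, a] ++ repAB n ++ [b, b, b]) := by
  intro c h
  induction h using Relation.ReflTransGen.head_induction_on with
  | refl => exact ⟨fun _ => ⟨0, rfl⟩, fun _ => Or.inl rfl⟩
  | head step rest ih =>
    rename_i ca cc
    obtain ⟨x, y, hdec, hmem⟩ := step
    obtain ⟨hp, hcase | hcase⟩ := Aqdf_mem_delta hmem
    · obtain ⟨hq, hx, hy⟩ := hcase
      obtain ⟨n, hn⟩ := ih.1 hp
      constructor
      · intro h1; rw [hq] at h1; exact absurd h1 (by simp)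
      · intro _; right; exact ⟨n, by rw [hdec, hx, hy, hn]⟩
    · obtain ⟨hq, hx, hy⟩ := hcase
      obtain ⟨n, hn⟩ := ih.1 hp
      constructor
      · intro _; refine ⟨n + 1, ?_⟩
        rw [hdec, hx, hy, hn, repAB_succ]; simp
      · intro h1; rw [hq] at h1; exact absurd h1 (by simp)

lemma Aqdf_lang : EqModLambda Aqdf.Lang Laaabbb := by
  intro w hw
  constructor
  · rintro ⟨qf, -, hcomp⟩
    have h := (Aqdf_invar qf (false, w) hcomp).2 rfl
    rcases h with h | ⟨n, hn⟩
    · exact absurd h hw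
    · exact ⟨n, hn⟩
  · rintro ⟨n, rfl⟩
    refine ⟨true, Set.mem_univ _, ?_⟩
    refine Relation.ReflTransGen.head ⟨[a, a, a], [b, b, b], rfl, ?_⟩ (Aqdf_rep_comp n)
    exact ⟨rfl, Or.inl ⟨rfl, rfl, rfl⟩⟩

/-- The class of languages accepted by quasi-deterministic all-final (qDF) sensing
5'→3' WK automata properly includes the class of languages accepted by
quasi-deterministic all-final simple (qDFS) sensing 5'→3' WK automata: every
qDFS automaton is a qDF automaton, and `aaa(ab)*bbb` is accepted by a qDF
sensing 5'→3' WK automaton but by no qDFS sensing 5'→3' WK automaton. -/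
theorem qDFS_proper_subset_qDF :
    (∀ (T : Type) (L : Set (List T)),
      AcceptsWith T (fun _ A => A.QuasiDet ∧ A.AllFinal ∧ A.Simple) L →
      AcceptsWith T (fun _ A => A.QuasiDet ∧ A.AllFinal) L) ∧
    AcceptsWith Letter (fun _ A => A.QuasiDet ∧ A.AllFinal) Laaabbb ∧
    ¬ AcceptsWith Letter (fun _ A => A.QuasiDet ∧ A.AllFinal ∧ A.Simple) Laaabbb := by
  refine ⟨?_, ?_, ?_⟩
  · rintro T L ⟨Q, hQ, A, ⟨h1, h2, -⟩, heq⟩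
    exact ⟨Q, hQ, A, ⟨h1, h2⟩, heq⟩
  · refine ⟨Bool, inferInstance, Aqdf, ⟨?_, rfl⟩, Aqdf_lang⟩
    rintro q w p r u v ⟨x, y, -, hp⟩ ⟨x', y', -, hr⟩
    exact (Aqdf_mem_delta hp).1.trans (Aqdf_mem_delta hr).1.symm
  · rintro ⟨Q, -, A, ⟨-, hAF, hS⟩, heq⟩
    obtain ⟨m, hm⟩ : ∃ m, ∀ (q : Q) (x y : List Letter),
        (A.δ q x y).Nonempty → x.length + y.length ≤ m := by
      obtain ⟨m, hm⟩ :=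
        (A.finite_delta.image (fun t => t.2.1.length + t.2.2.length)).bddAbove
      exact ⟨m, fun q x y hne => hm ⟨(q, x, y), hne, rfl⟩⟩
    set n := m with hn
    set w : List Letter := [a, a, a] ++ repAB n ++ [b, b, b] with hw
    have hwne : w ≠ [] := by simp [hw]
    have hwLang : w ∈ A.Lang := (heq w hwne).2 ⟨n, rfl⟩
    obtain ⟨qf, -, hcomp⟩ := hwLang
    obtain ⟨x, y, mid, q1, q2, hmem, hdec, hne, hcomp2⟩ :=
      firstRead A qf (A.q0, w) hcomp hwne
    have hlen : x.length + y.length ≤ m := hm q1 x y ⟨q2, hmem⟩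
    have hxyL : x ++ y ∈ Laaabbb := by
      refine (heq _ hne).1 ⟨q2, ?_, hcomp2⟩
      rw [hAF]; trivial
    obtain ⟨k, hk⟩ := hxyL
    rcases hS q1 x y ⟨q2, hmem⟩ with hx | hy
    · -- x = [] : the word read is a proper suffix y = aaa (ab)^k bbb of w
      subst hx
      simp only [List.nil_append] at hk hdec
      have hky : y.length = 2 * k + 6 := by
        rw [hk, List.length_append, List.length_append,
          show ((List.replicate k [a, b]).flatten) = repAB k from rfl, repAB_length]
        simp only [List.length_cons, List.length_nil]
        omega
      have hkn : k < n := by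
        have h6 := hlen; rw [hky] at h6; simp only [List.length_nil] at h6; omega
      obtain ⟨j, hj⟩ : ∃ j, n = (j + 1) + k := ⟨n - k - 1, by omega⟩
      have e0 : mid ++ ([a, a, a] ++ repAB k ++ [b, b, b]) =
          [a, a, a] ++ (repAB (j + 1) ++ repAB k) ++ [b, b, b] := by
        rw [← repAB_add, ← hj, ← hk, ← hdec, hw]
      have e1 : (mid ++ [a, a, a] ++ repAB k) ++ [b, b, b] =
          (([a, a, a] ++ repAB (j + 1)) ++ repAB k) ++ [b, b, b] := by
        simp only [← List.append_assoc] at e0 ⊢; exact e0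
      have e2 := List.append_cancel_right (List.append_cancel_right e1)
      have l1 : (mid ++ [a, a, a]).getLast? = some a := by
        rw [show mid ++ [a, a, a] = (mid ++ [a, a]) ++ [a] by simp,
          List.getLast?_concat]
      have l2 : ([a, a, a] ++ repAB (j + 1)).getLast? = some b := by
        rw [show [a, a, a] ++ repAB (j + 1) =
            ([a, a, a] ++ repAB j ++ [a]) ++ [b] by
          rw [repAB_add j 1, repAB_one]; simp, List.getLast?_concat]
      rw [e2, l2] at l1
      exact absurd l1 (by simp)
    · -- y = [] : the word read is a proper prefix x = aaa (ab)^k bbb of w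
      subst hy
      simp only [List.append_nil] at hk hdec
      have hkx : x.length = 2 * k + 6 := by
        rw [hk, List.length_append, List.length_append,
          show ((List.replicate k [a, b]).flatten) = repAB k from rfl, repAB_length]
        simp only [List.length_cons, List.length_nil]
        omega
      have hkn : k < n := by
        have h6 := hlen; rw [hkx] at h6; simp only [List.length_nil] at h6; omega
      obtain ⟨j, hj⟩ : ∃ j, n = k + (j + 1) := ⟨n - k - 1, by omega⟩
      have e0 : [a, a, a] ++ (repAB k ++ ([b, b, b] ++ mid)) =
          [a, a, a] ++ (repAB k ++ (repAB (j + 1) ++ [b, b, b])) := by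
        have h7 : ([a, a, a] ++ repAB k ++ [b, b, b]) ++ mid =
            [a, a, a] ++ (repAB k ++ repAB (j + 1)) ++ [b, b, b] := by
          rw [← repAB_add, ← hj, ← hk, ← hdec, hw]
        simp only [← List.append_assoc] at h7 ⊢; exact h7
      have e1 := List.append_cancel_left (List.append_cancel_left e0)
      rw [repAB_succ] at e1
      have e2 := congrArg List.head? e1
      simp at e2
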